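/- Let m₁, m₂, r, d be natural numbers with r < m₁ and r < m₂, let h₁, h₂ > 0 be real numbers, let q_{1,0},…,q_{1,m₁} ∈ ℝᵈ and q_{2,0},…,q_{2,m₂} ∈ ℝᵈ, and set Q₁(u) = Σ_{j} q_{1,j} B^{m₁}ⱼ(u) and Q₂(u) = Σ_{j} q_{2,j} B^{m₂}ⱼ(u). Define a_{i,j} := hᵢʲ / (mᵢ−j+1)ⱼ for i = 1,2. Then the scaled derivative matching conditions h₁^{−j} Q₁⁽ʲ⁾(1) = h₂^{−j} Q₂⁽ʲ⁾(0) hold for all j = 0,1,…,r if and only if there exist a point κ ∈ ℝᵈ and vectors λ₁,…,λ_r ∈ ℝᵈ such that for every h' = 0,1,…,r: q_{1,m₁−h'} = κ + Σ_{j=1}^{h'} (−1)ʲ C(h',j) a_{1,j} λⱼ and q_{2,h'} = κ + Σ_{j=1}^{h'} C(h',j) a_{2,j} λⱼ. -/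

import Mathlib

open Finset intervalIntegral

/-- The Bernstein basis polynomial `B^n_j(u) = C(n,j) u^j (1-u)^(n-j)`. -/
noncomputable def bern (n j : ℕ) (u : ℝ) : ℝ := (n.choose j : ℝ) * u ^ j * (1 - u) ^ (n - j)

/-- `a i j = hᵢ^j / (mᵢ - j + 1)ⱼ`, with the shifted factorial `(c)ⱼ = c (c+1) ⋯ (c+j-1)`. -/
noncomputable def aCoef (hi : ℝ) (mi j : ℕ) : ℝ :=
  hi ^ j / (ascPochhammer ℝ j).eval ((mi : ℝ) - j + 1)

open Polynomial

set_option maxRecDepth 8000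
set_option linter.unusedSectionVars false

section sec1
variable {E : Type*} [AddCommGroup E] [Module ℝ E]

lemma alt_sum_choose_real (n : ℕ) :
    ∑ i ∈ range (n + 1), (-1 : ℝ) ^ i * (n.choose i : ℝ) = if n = 0 then 1 else 0 := by
  have h := Int.alternating_sum_range_choose (n := n)
  apply_fun (Int.cast : ℤ → ℝ) at h
  push_cast at h
  convert h using 2

lemma core_sum (n j : ℕ) :
    ∑ k ∈ range (n + 1), (-1 : ℝ) ^ k * (n.choose k : ℝ) * (k.choose j : ℝ)
      = if j = n then (-1 : ℝ) ^ n else 0 := by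
  by_cases hj : j ≤ n
  · have hsub : Finset.Ico j (n + 1) ⊆ range (n + 1) := by
      intro x hx; simp only [mem_Ico] at hx; simp [hx.2]
    rw [← Finset.sum_subset hsub (by
      intro x hx hx2
      simp only [mem_range] at hx
      simp only [mem_Ico, not_and, not_le] at hx2
      have hxj : x < j := by omega
      rw [Nat.choose_eq_zero_of_lt hxj]; ring)]
    rw [Finset.sum_Ico_eq_sum_range]
    have hred : ∀ t ∈ range (n + 1 - j), (-1 : ℝ) ^ (j + t) * (n.choose (j + t) : ℝ)
        * ((j + t).choose j : ℝ)
        = ((-1 : ℝ) ^ j * (n.choose j : ℝ)) * ((-1 : ℝ) ^ t * ((n - j).choose t : ℝ)) := by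
      intro t ht
      simp only [mem_range] at ht
      have h1 : j + t ≤ n := by omega
      have h2 : j ≤ j + t := by omega
      have hmul := Nat.choose_mul (n := n) h2
      have hjt : j + t - j = t := by omega
      rw [hjt] at hmul
      have hc : ((n.choose (j + t) : ℝ)) * ((j + t).choose j : ℝ)
          = (n.choose j : ℝ) * (((n - j).choose t) : ℝ) := by
        rw [← Nat.cast_mul, ← Nat.cast_mul, hmul]
      rw [pow_add]
      calc (-1:ℝ)^j * (-1:ℝ)^t * (n.choose (j+t) : ℝ) * ((j+t).choose j : ℝ)
          = (-1:ℝ)^j * (-1:ℝ)^t * ((n.choose (j+t) : ℝ) * ((j+t).choose j : ℝ)) := by ring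
        _ = (-1:ℝ)^j * (-1:ℝ)^t * ((n.choose j : ℝ) * ((n - j).choose t : ℝ)) := by rw [hc]
        _ = ((-1 : ℝ) ^ j * (n.choose j : ℝ)) * ((-1 : ℝ) ^ t * ((n - j).choose t : ℝ)) := by ring
    rw [Finset.sum_congr rfl hred, ← Finset.mul_sum]
    have hnj : n + 1 - j = (n - j) + 1 := by omega
    rw [hnj, alt_sum_choose_real]
    rcases eq_or_lt_of_le hj with h | h
    · subst h; simp
    · have h0 : n - j ≠ 0 := by omega
      rw [if_neg h0, if_neg (by omega), mul_zero]
  · push_neg at hj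
    rw [if_neg (by omega)]
    apply Finset.sum_eq_zero
    intro k hk
    simp only [mem_range] at hk
    rw [Nat.choose_eq_zero_of_lt (show k < j by omega)]
    ring

/-- `G n g = ∑_{k≤n} (-1)^k C(n,k) • g k` -/
noncomputable def Gop (n : ℕ) (g : ℕ → E) : E :=
  ∑ k ∈ range (n + 1), ((-1 : ℝ) ^ k * (n.choose k : ℝ)) • g k

lemma Gop_congr {n : ℕ} {g g' : ℕ → E} (h : ∀ k ≤ n, g k = g' k) : Gop n g = Gop n g' := by
  unfold Gop
  exact Finset.sum_congr rfl fun k hk => by rw [h k (by simpa [Nat.lt_succ_iff] using hk)]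

lemma Gop_invol (n : ℕ) (g g' : ℕ → E) (h : ∀ k ≤ n, g' k = Gop k g) : Gop n g' = g n := by
  have step1 : Gop n g' = ∑ k ∈ range (n + 1), ∑ j ∈ range (n + 1),
      (((-1 : ℝ) ^ k * (n.choose k : ℝ)) * ((-1 : ℝ) ^ j * (k.choose j : ℝ))) • g j := by
    unfold Gop
    refine Finset.sum_congr rfl fun k hk => ?_
    simp only [mem_range, Nat.lt_succ_iff] at hk
    rw [h k hk]
    unfold Gop
    have hsub : range (k + 1) ⊆ range (n + 1) := by
      intro x hx; simp only [mem_range] at hx ⊢; omega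
    rw [Finset.sum_subset hsub (by
      intro x hx hx2
      simp only [mem_range] at hx hx2
      rw [Nat.choose_eq_zero_of_lt (show k < x by omega)]
      simp)]
    rw [Finset.smul_sum]
    exact Finset.sum_congr rfl fun j _ => by rw [smul_smul]
  rw [step1, Finset.sum_comm]
  have step2 : ∀ j ∈ range (n + 1),
      (∑ k ∈ range (n + 1),
        (((-1:ℝ)^k * (n.choose k : ℝ)) * ((-1:ℝ)^j * (k.choose j:ℝ))) • g j)
      = ((if j = n then (-1:ℝ)^n else 0) * (-1:ℝ)^j) • g j := by
    intro j hj
    rw [← Finset.sum_smul, ← core_sum n j, Finset.sum_mul]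
    congr 1
    exact Finset.sum_congr rfl fun k _ => by ring
  rw [Finset.sum_congr rfl step2]
  rw [Finset.sum_eq_single n]
  · rw [if_pos rfl, ← pow_add, Even.neg_one_pow ⟨n, rfl⟩, one_smul]
  · intro b hb hbn
    rw [if_neg hbn]
    simp
  · intro hn
    simp at hn


noncomputable def bernPoly (n j : ℕ) : Polynomial ℝ :=
  C (n.choose j : ℝ) * X ^ j * (1 - X) ^ (n - j)

lemma bern_eq (n j : ℕ) (u : ℝ) : bern n j u = (bernPoly n j).eval u := by
  simp [bern, bernPoly]

end sec1
section sec2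
variable {E : Type*} [NormedAddCommGroup E] [NormedSpace ℝ E]

lemma iteratedDeriv_sum_eval_smul {ι : Type*} (s : Finset ι) (k : ℕ) :
    ∀ (p : ι → Polynomial ℝ) (q : ι → E) (x : ℝ),
    iteratedDeriv k (fun u : ℝ => ∑ i ∈ s, (p i).eval u • q i) x
      = ∑ i ∈ s, ((Polynomial.derivative^[k] (p i)).eval x) • q i := by
  induction k with
  | zero => intro p q x; simp
  | succ k ih =>
    intro p q x
    rw [iteratedDeriv_succ']
    have hderiv : deriv (fun u : ℝ => ∑ i ∈ s, (p i).eval u • q i)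
        = fun u => ∑ i ∈ s, ((p i).derivative.eval u) • q i := by
      funext u
      exact (HasDerivAt.fun_sum (fun i _ => ((p i).hasDerivAt u).smul_const (q i))).deriv
    rw [hderiv, ih (fun i => (p i).derivative) q x]
    exact Finset.sum_congr rfl fun i _ => by rw [← Function.iterate_succ_apply]

lemma eval0_iter_X_pow (n j : ℕ) :
    (Polynomial.derivative^[j] ((X : Polynomial ℝ) ^ n)).eval 0
      = if n = j then (j.factorial : ℝ) else 0 := by
  rw [Polynomial.iterate_derivative_X_pow_eq_natCast_mul]
  rcases lt_trichotomy n j with h | h | h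
  · rw [Nat.descFactorial_eq_zero_iff_lt.mpr h]
    simp [Nat.ne_of_lt h]
  · subst h
    simp [Nat.descFactorial_self]
  · rw [if_neg (by omega)]
    simp [pow_eq_zero_iff, Nat.sub_ne_zero_of_lt h]

lemma eval0_bernPoly {m i j : ℕ} (him : i ≤ m) (hjm : j ≤ m) :
    (Polynomial.derivative^[j] (bernPoly m i)).eval 0
      = if i ≤ j then (-1 : ℝ) ^ (j - i) * (j.choose i : ℝ) * (m.descFactorial j : ℝ) else 0 := by
  have hexp : bernPoly m i = ∑ k ∈ range (m - i + 1),
      C (((m.choose i : ℝ)) * ((m - i).choose k : ℝ) * (-1 : ℝ) ^ k) * X ^ (i + k) := by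
    unfold bernPoly
    rw [sub_eq_add_neg, add_comm, add_pow]
    rw [Finset.mul_sum]
    refine Finset.sum_congr rfl fun k hk => ?_
    have hneg : (-X : ℝ[X]) ^ k = C ((-1 : ℝ) ^ k) * X ^ k := by
      rw [neg_pow, map_pow, map_neg, map_one]
    rw [one_pow, mul_one, hneg]
    rw [map_mul, map_mul, pow_add]
    rw [show ((m - i).choose k : ℝ[X]) = C (((m - i).choose k : ℝ)) by
      rw [C_eq_natCast]]
    ring
  rw [hexp, Polynomial.iterate_derivative_sum]
  simp_rw [Polynomial.iterate_derivative_C_mul, Polynomial.eval_finset_sum, Polynomial.eval_mul,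
    Polynomial.eval_C, eval0_iter_X_pow]
  by_cases hij : i ≤ j
  · rw [Finset.sum_eq_single (j - i)]
    · rw [if_pos (by omega), if_pos hij]
      have hchoose : (m.choose i) * ((m - i).choose (j - i)) * j.factorial
          = (j.choose i) * (m.descFactorial j) := by
        have h1 := Nat.choose_mul (n := m) hij
        have h2 : m.descFactorial j = j.factorial * m.choose j :=
          Nat.descFactorial_eq_factorial_mul_choose m j
        calc (m.choose i) * ((m - i).choose (j - i)) * j.factorial
            = (m.choose j * j.choose i) * j.factorial := by rw [← h1]
          _ = (j.choose i) * (j.factorial * m.choose j) := by ring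
          _ = (j.choose i) * (m.descFactorial j) := by rw [← h2]
      have : ((m.choose i : ℝ)) * ((m - i).choose (j - i) : ℝ) * (j.factorial : ℝ)
          = (j.choose i : ℝ) * (m.descFactorial j : ℝ) := by
        rw [← Nat.cast_mul, ← Nat.cast_mul, hchoose, Nat.cast_mul]
      calc ((m.choose i : ℝ)) * ((m - i).choose (j - i) : ℝ) * (-1:ℝ)^(j-i) * (j.factorial : ℝ)
          = ((m.choose i : ℝ) * ((m - i).choose (j - i) : ℝ) * (j.factorial : ℝ)) * (-1:ℝ)^(j-i) := by ring
        _ = ((j.choose i : ℝ) * (m.descFactorial j : ℝ)) * (-1:ℝ)^(j-i) := by rw [this]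
        _ = (-1 : ℝ) ^ (j - i) * (j.choose i : ℝ) * (m.descFactorial j : ℝ) := by ring
    · intro b hb hbne
      rw [if_neg (by omega), mul_zero]
    · intro hni
      exfalso
      simp only [mem_range] at hni
      omega
  · rw [if_neg hij]
    apply Finset.sum_eq_zero
    intro k hk
    rw [if_neg (by omega), mul_zero]

lemma neg_one_pow_sub_real {i j : ℕ} (h : i ≤ j) :
    (-1 : ℝ) ^ (j - i) = (-1 : ℝ) ^ j * (-1 : ℝ) ^ i := by
  have h1 : ((-1 : ℝ) ^ i) * ((-1 : ℝ) ^ i) = 1 := by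
    rw [← pow_add]; exact Even.neg_one_pow ⟨i, rfl⟩
  calc (-1:ℝ)^(j-i) = (-1:ℝ)^(j-i) * (((-1:ℝ)^i) * ((-1:ℝ)^i)) := by rw [h1, mul_one]
    _ = ((-1:ℝ)^(j-i) * (-1:ℝ)^i) * (-1:ℝ)^i := by ring
    _ = (-1:ℝ)^j * (-1:ℝ)^i := by rw [← pow_add, Nat.sub_add_cancel h]

lemma bernPoly_comp_one_sub {m i : ℕ} (him : i ≤ m) :
    (bernPoly m (m - i)).comp (1 - X) = bernPoly m i := by
  unfold bernPoly
  have h1 : m - (m - i) = i := by omega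
  rw [h1, Nat.choose_symm him]
  rw [mul_comp, mul_comp, C_comp, pow_comp, pow_comp, X_comp, sub_comp, one_comp, X_comp]
  ring_nf

lemma eval1_bernPoly {m i j : ℕ} (him : i ≤ m) (hjm : j ≤ m) :
    (Polynomial.derivative^[j] (bernPoly m i)).eval 1
      = (-1:ℝ)^j * (if m - i ≤ j then
          (-1 : ℝ) ^ (j - (m - i)) * (j.choose (m - i) : ℝ) * (m.descFactorial j : ℝ) else 0) := by
  rw [← bernPoly_comp_one_sub him, iterate_derivative_comp_one_sub_X, eval_mul, eval_pow,
    eval_neg, eval_one, eval_comp, eval_sub, eval_one, eval_X, sub_self,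
    eval0_bernPoly (by omega) hjm]

lemma descFac_pos {m j : ℕ} (h : j ≤ m) : 0 < m.descFactorial j := by
  rcases Nat.eq_zero_or_pos (m.descFactorial j) with h0 | h0
  · exact absurd (Nat.descFactorial_eq_zero_iff_lt.mp h0) (by omega)
  · exact h0

lemma bernSum_iteratedDeriv_zero {m j : ℕ} (hjm : j ≤ m) (q : ℕ → E) :
    iteratedDeriv j (fun u : ℝ => ∑ i ∈ range (m + 1), bern m i u • q i) 0
      = ((-1 : ℝ) ^ j * (m.descFactorial j : ℝ)) • Gop j q := by
  have hfun : (fun u : ℝ => ∑ i ∈ range (m + 1), bern m i u • q i)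
      = fun u => ∑ i ∈ range (m + 1), (bernPoly m i).eval u • q i := by
    funext u; exact Finset.sum_congr rfl fun i _ => by rw [bern_eq]
  rw [hfun, iteratedDeriv_sum_eval_smul]
  have hterm : ∀ i ∈ range (m + 1),
      ((Polynomial.derivative^[j] (bernPoly m i)).eval 0) • q i
      = (if i ≤ j then ((-1:ℝ)^(j-i) * (j.choose i : ℝ) * (m.descFactorial j : ℝ)) else 0) • q i := by
    intro i hi
    simp only [mem_range, Nat.lt_succ_iff] at hi
    rw [eval0_bernPoly hi hjm]
  rw [Finset.sum_congr rfl hterm]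
  have hsub : range (j + 1) ⊆ range (m + 1) := by
    intro x hx; simp only [mem_range] at hx ⊢; omega
  rw [← Finset.sum_subset hsub (by
    intro x hx hx2
    simp only [mem_range] at hx hx2
    rw [if_neg (by omega), zero_smul])]
  unfold Gop
  rw [Finset.smul_sum]
  refine Finset.sum_congr rfl fun i hi => ?_
  simp only [mem_range, Nat.lt_succ_iff] at hi
  rw [if_pos hi, smul_smul]
  congr 1
  rw [neg_one_pow_sub_real hi]
  ring

lemma bernSum_iteratedDeriv_one {m j : ℕ} (hjm : j ≤ m) (q : ℕ → E) :
    iteratedDeriv j (fun u : ℝ => ∑ i ∈ range (m + 1), bern m i u • q i) 1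
      = ((m.descFactorial j : ℝ)) • Gop j (fun k => q (m - k)) := by
  have hfun : (fun u : ℝ => ∑ i ∈ range (m + 1), bern m i u • q i)
      = fun u => ∑ i ∈ range (m + 1), (bernPoly m i).eval u • q i := by
    funext u; exact Finset.sum_congr rfl fun i _ => by rw [bern_eq]
  rw [hfun, iteratedDeriv_sum_eval_smul]
  rw [← Finset.sum_range_reflect]
  have hterm : ∀ i ∈ range (m + 1),
      ((Polynomial.derivative^[j] (bernPoly m (m + 1 - 1 - i))).eval 1) • q (m + 1 - 1 - i)
      = (if i ≤ j then ((-1:ℝ)^i * (j.choose i : ℝ) * (m.descFactorial j : ℝ)) else 0) • q (m - i) := by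
    intro i hi
    simp only [mem_range, Nat.lt_succ_iff] at hi
    have h1 : m + 1 - 1 - i = m - i := by omega
    rw [h1, eval1_bernPoly (by omega) hjm]
    have h2 : m - (m - i) = i := by omega
    rw [h2]
    congr 1
    by_cases hij : i ≤ j
    · rw [if_pos hij, if_pos hij, neg_one_pow_sub_real hij]
      have hjj : (-1:ℝ)^j * (-1:ℝ)^j = 1 := by
        rw [← pow_add]; exact Even.neg_one_pow ⟨j, rfl⟩
      calc (-1:ℝ)^j * ((-1:ℝ)^j * (-1:ℝ)^i * (j.choose i : ℝ) * (m.descFactorial j : ℝ))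
          = ((-1:ℝ)^j * (-1:ℝ)^j) * ((-1:ℝ)^i * (j.choose i : ℝ) * (m.descFactorial j : ℝ)) := by
            ring
        _ = (-1:ℝ)^i * (j.choose i : ℝ) * (m.descFactorial j : ℝ) := by rw [hjj, one_mul]
    · rw [if_neg hij, if_neg hij, mul_zero]
  rw [Finset.sum_congr rfl hterm]
  have hsub : range (j + 1) ⊆ range (m + 1) := by
    intro x hx; simp only [mem_range] at hx ⊢; omega
  rw [← Finset.sum_subset hsub (by
    intro x hx hx2
    simp only [mem_range] at hx hx2
    rw [if_neg (by omega), zero_smul])]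
  unfold Gop
  rw [Finset.smul_sum]
  refine Finset.sum_congr rfl fun i hi => ?_
  simp only [mem_range, Nat.lt_succ_iff] at hi
  rw [if_pos hi, smul_smul]
  congr 1
  ring

lemma sum_range_succ_head_Icc (f : ℕ → E) (n : ℕ) :
    ∑ j ∈ range (n + 1), f j = f 0 + ∑ j ∈ Finset.Icc 1 n, f j := by
  induction n with
  | zero => simp
  | succ n ih =>
    rw [Finset.sum_range_succ, ih, Finset.sum_Icc_succ_top (by omega), add_assoc]

end sec2

theorem Cr_continuity_iff_parameters (m₁ m₂ r d : ℕ) (hr₁ : r < m₁) (hr₂ : r < m₂)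
    (h₁ h₂ : ℝ) (hh₁ : 0 < h₁) (hh₂ : 0 < h₂)
    (q₁ q₂ : ℕ → EuclideanSpace ℝ (Fin d)) :
    (∀ j ≤ r,
        (h₁ ^ j)⁻¹ •
            iteratedDeriv j (fun u : ℝ => ∑ i ∈ range (m₁ + 1), bern m₁ i u • q₁ i) 1
          = (h₂ ^ j)⁻¹ •
              iteratedDeriv j (fun u : ℝ => ∑ i ∈ range (m₂ + 1), bern m₂ i u • q₂ i) 0) ↔
    (∃ (κ : EuclideanSpace ℝ (Fin d)) (lam : ℕ → EuclideanSpace ℝ (Fin d)),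
      ∀ h' ≤ r,
        q₁ (m₁ - h') = κ + ∑ j ∈ Finset.Icc 1 h',
            ((-1 : ℝ) ^ j * (h'.choose j : ℝ) * aCoef h₁ m₁ j) • lam j ∧
        q₂ h' = κ + ∑ j ∈ Finset.Icc 1 h',
            ((h'.choose j : ℝ) * aCoef h₂ m₂ j) • lam j) := by
  classical
  set g₁ : ℕ → EuclideanSpace ℝ (Fin d) := fun k => q₁ (m₁ - k) with hg₁def
  have hP : ∀ (m j : ℕ), (ascPochhammer ℝ j).eval ((m : ℝ) - j + 1) = (m.descFactorial j : ℝ) := by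
    intro m j
    rw [← descPochhammer_eval_eq_ascPochhammer, descPochhammer_eval_eq_descFactorial]
  have hA₁ : ∀ j, aCoef h₁ m₁ j = h₁ ^ j / (m₁.descFactorial j : ℝ) := fun j => by
    rw [aCoef, hP]
  have hA₂ : ∀ j, aCoef h₂ m₂ j = h₂ ^ j / (m₂.descFactorial j : ℝ) := fun j => by
    rw [aCoef, hP]
  have hA₁ne : ∀ j ≤ r, aCoef h₁ m₁ j ≠ 0 := fun j hj => by
    rw [hA₁]
    exact div_ne_zero (pow_ne_zero _ (ne_of_gt hh₁))
      (Nat.cast_ne_zero.mpr (descFac_pos (show j ≤ m₁ by omega)).ne')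
  have hA₂ne : ∀ j ≤ r, aCoef h₂ m₂ j ≠ 0 := fun j hj => by
    rw [hA₂]
    exact div_ne_zero (pow_ne_zero _ (ne_of_gt hh₂))
      (Nat.cast_ne_zero.mpr (descFac_pos (show j ≤ m₂ by omega)).ne')
  have hA₁0 : aCoef h₁ m₁ 0 = 1 := by rw [hA₁]; simp
  have hA₂0 : aCoef h₂ m₂ 0 = 1 := by rw [hA₂]; simp
  have hiff : ∀ j ≤ r,
      ((h₁ ^ j)⁻¹ •
          iteratedDeriv j (fun u : ℝ => ∑ i ∈ range (m₁ + 1), bern m₁ i u • q₁ i) 1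
        = (h₂ ^ j)⁻¹ •
            iteratedDeriv j (fun u : ℝ => ∑ i ∈ range (m₂ + 1), bern m₂ i u • q₂ i) 0)
      ↔ ((aCoef h₁ m₁ j)⁻¹ • Gop j g₁
          = ((-1 : ℝ) ^ j * (aCoef h₂ m₂ j)⁻¹) • Gop j q₂) := by
    intro j hj
    rw [bernSum_iteratedDeriv_one (show j ≤ m₁ by omega) q₁,
      bernSum_iteratedDeriv_zero (show j ≤ m₂ by omega) q₂, smul_smul, smul_smul]
    have e1 : (h₁ ^ j)⁻¹ * (m₁.descFactorial j : ℝ) = (aCoef h₁ m₁ j)⁻¹ := by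
      rw [hA₁, inv_div, div_eq_mul_inv, mul_comm]
    have e2 : (h₂ ^ j)⁻¹ * ((-1 : ℝ) ^ j * (m₂.descFactorial j : ℝ))
        = (-1 : ℝ) ^ j * (aCoef h₂ m₂ j)⁻¹ := by
      rw [hA₂, inv_div, div_eq_mul_inv]; ring
    rw [e1, e2]
  constructor
  · intro H
    have hL1 : ∀ t ≤ r, (aCoef h₁ m₁ t) •
        (((-1 : ℝ) ^ t * (aCoef h₂ m₂ t)⁻¹) • Gop t q₂) = Gop t g₁ := by
      intro t ht
      rw [← (hiff t ht).mp (H t ht), smul_smul, mul_inv_cancel₀ (hA₁ne t ht), one_smul]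
    have hL2 : ∀ t ≤ r, ((-1 : ℝ) ^ t * aCoef h₂ m₂ t) •
        (((-1 : ℝ) ^ t * (aCoef h₂ m₂ t)⁻¹) • Gop t q₂) = Gop t q₂ := by
      intro t ht
      rw [smul_smul]
      have hjj : (-1 : ℝ) ^ t * (-1 : ℝ) ^ t = 1 := by
        rw [← pow_add]; exact Even.neg_one_pow ⟨t, rfl⟩
      have hs : (-1 : ℝ) ^ t * aCoef h₂ m₂ t * ((-1 : ℝ) ^ t * (aCoef h₂ m₂ t)⁻¹) = 1 := by
        calc (-1 : ℝ) ^ t * aCoef h₂ m₂ t * ((-1 : ℝ) ^ t * (aCoef h₂ m₂ t)⁻¹)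
            = ((-1 : ℝ) ^ t * (-1 : ℝ) ^ t) * (aCoef h₂ m₂ t * (aCoef h₂ m₂ t)⁻¹) := by ring
          _ = 1 := by rw [hjj, mul_inv_cancel₀ (hA₂ne t ht), one_mul]
      rw [hs, one_smul]
    have hκ : g₁ 0 = q₂ 0 := by
      have h0 := (hiff 0 (Nat.zero_le r)).mp (H 0 (Nat.zero_le r))
      rw [hA₁0, hA₂0] at h0
      simpa [Gop] using h0
    refine ⟨q₂ 0, fun t => ((-1 : ℝ) ^ t * (aCoef h₂ m₂ t)⁻¹) • Gop t q₂, ?_⟩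
    intro h' hh'
    constructor
    · have hcalc : q₂ 0 + ∑ j ∈ Finset.Icc 1 h',
          ((-1 : ℝ) ^ j * (h'.choose j : ℝ) * aCoef h₁ m₁ j) •
            (((-1 : ℝ) ^ j * (aCoef h₂ m₂ j)⁻¹) • Gop j q₂) = q₁ (m₁ - h') := by
        calc q₂ 0 + ∑ j ∈ Finset.Icc 1 h',
              ((-1 : ℝ) ^ j * (h'.choose j : ℝ) * aCoef h₁ m₁ j) •
                (((-1 : ℝ) ^ j * (aCoef h₂ m₂ j)⁻¹) • Gop j q₂)
            = ∑ j ∈ range (h' + 1),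
              ((-1 : ℝ) ^ j * (h'.choose j : ℝ)) • Gop j g₁ := by
              rw [sum_range_succ_head_Icc
                (fun j => ((-1 : ℝ) ^ j * (h'.choose j : ℝ)) • Gop j g₁) h']
              congr 1
              · simp [Gop, ← hκ]
              · refine Finset.sum_congr rfl fun t ht => ?_
                simp only [Finset.mem_Icc] at ht
                rw [← hL1 t (by omega)]
                conv_rhs => rw [smul_smul, smul_smul]
                conv_lhs => rw [smul_smul]
          _ = Gop h' (fun k => Gop k g₁) := rfl
          _ = g₁ h' := Gop_invol h' g₁ _ (fun k _ => rfl)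
          _ = q₁ (m₁ - h') := rfl
      exact hcalc.symm
    · have hcalc : q₂ 0 + ∑ j ∈ Finset.Icc 1 h',
          ((h'.choose j : ℝ) * aCoef h₂ m₂ j) •
            (((-1 : ℝ) ^ j * (aCoef h₂ m₂ j)⁻¹) • Gop j q₂) = q₂ h' := by
        calc q₂ 0 + ∑ j ∈ Finset.Icc 1 h',
              ((h'.choose j : ℝ) * aCoef h₂ m₂ j) •
                (((-1 : ℝ) ^ j * (aCoef h₂ m₂ j)⁻¹) • Gop j q₂)
            = ∑ j ∈ range (h' + 1),
              ((-1 : ℝ) ^ j * (h'.choose j : ℝ)) • Gop j q₂ := by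
              rw [sum_range_succ_head_Icc
                (fun j => ((-1 : ℝ) ^ j * (h'.choose j : ℝ)) • Gop j q₂) h']
              congr 1
              · simp [Gop]
              · refine Finset.sum_congr rfl fun t ht => ?_
                simp only [Finset.mem_Icc] at ht
                conv_lhs => rw [smul_smul]
                congr 1
                have hinv : aCoef h₂ m₂ t * (aCoef h₂ m₂ t)⁻¹ = 1 :=
                  mul_inv_cancel₀ (hA₂ne t (by omega))
                calc (h'.choose t : ℝ) * aCoef h₂ m₂ t * ((-1 : ℝ) ^ t * (aCoef h₂ m₂ t)⁻¹)
                    = (-1 : ℝ) ^ t * (h'.choose t : ℝ)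
                        * (aCoef h₂ m₂ t * (aCoef h₂ m₂ t)⁻¹) := by ring
                  _ = (-1 : ℝ) ^ t * (h'.choose t : ℝ) := by rw [hinv, mul_one]
          _ = Gop h' (fun k => Gop k q₂) := rfl
          _ = q₂ h' := Gop_invol h' q₂ _ (fun k _ => rfl)
      exact hcalc.symm
  · rintro ⟨κ, lam, hp⟩ j hj
    set μ : ℕ → EuclideanSpace ℝ (Fin d) :=
      fun k => if k = 0 then κ else ((-1 : ℝ) ^ k * aCoef h₂ m₂ k) • lam k with hμdef
    set ν : ℕ → EuclideanSpace ℝ (Fin d) :=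
      fun k => if k = 0 then κ else (aCoef h₁ m₁ k) • lam k with hνdef
    have hq₂ : ∀ k ≤ r, q₂ k = Gop k μ := by
      intro k hk
      rw [(hp k hk).2]
      rw [show Gop k μ = ∑ t ∈ range (k + 1),
        ((-1 : ℝ) ^ t * (k.choose t : ℝ)) • μ t from rfl]
      rw [sum_range_succ_head_Icc (fun t => ((-1 : ℝ) ^ t * (k.choose t : ℝ)) • μ t) k]
      congr 1
      · simp [hμdef]
      · refine Finset.sum_congr rfl fun t ht => ?_
        simp only [Finset.mem_Icc] at ht
        rw [hμdef]
        simp only [if_neg (show t ≠ 0 by omega)]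
        rw [smul_smul]
        congr 1
        have hjj : (-1 : ℝ) ^ t * (-1 : ℝ) ^ t = 1 := by
          rw [← pow_add]; exact Even.neg_one_pow ⟨t, rfl⟩
        calc (k.choose t : ℝ) * aCoef h₂ m₂ t
            = ((-1 : ℝ) ^ t * (-1 : ℝ) ^ t) * ((k.choose t : ℝ) * aCoef h₂ m₂ t) := by
              rw [hjj, one_mul]
          _ = (-1 : ℝ) ^ t * (k.choose t : ℝ) * ((-1 : ℝ) ^ t * aCoef h₂ m₂ t) := by ring
    have hg₁ : ∀ k ≤ r, g₁ k = Gop k ν := by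
      intro k hk
      rw [show g₁ k = q₁ (m₁ - k) from rfl, (hp k hk).1]
      rw [show Gop k ν = ∑ t ∈ range (k + 1),
        ((-1 : ℝ) ^ t * (k.choose t : ℝ)) • ν t from rfl]
      rw [sum_range_succ_head_Icc (fun t => ((-1 : ℝ) ^ t * (k.choose t : ℝ)) • ν t) k]
      congr 1
      · simp [hνdef]
      · refine Finset.sum_congr rfl fun t ht => ?_
        simp only [Finset.mem_Icc] at ht
        rw [hνdef]
        simp only [if_neg (show t ≠ 0 by omega)]
        rw [smul_smul]
    rw [hiff j hj]
    rw [Gop_invol j μ q₂ (fun k hk => hq₂ k (by omega)),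
      Gop_invol j ν g₁ (fun k hk => hg₁ k (by omega))]
    by_cases hj0 : j = 0
    · subst hj0
      simp [hμdef, hνdef, hA₁0, hA₂0]
    · rw [hμdef, hνdef]
      simp only [if_neg hj0]
      rw [smul_smul, smul_smul]
      congr 1
      have hjj : (-1 : ℝ) ^ j * (-1 : ℝ) ^ j = 1 := by
        rw [← pow_add]; exact Even.neg_one_pow ⟨j, rfl⟩
      calc (aCoef h₁ m₁ j)⁻¹ * aCoef h₁ m₁ j = 1 := inv_mul_cancel₀ (hA₁ne j hj)
        _ = ((-1 : ℝ) ^ j * (-1 : ℝ) ^ j) * ((aCoef h₂ m₂ j)⁻¹ * aCoef h₂ m₂ j) := by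
            rw [hjj, inv_mul_cancel₀ (hA₂ne j hj), one_mul]
        _ = (-1 : ℝ) ^ j * (aCoef h₂ m₂ j)⁻¹ * ((-1 : ℝ) ^ j * aCoef h₂ m₂ j) := by ring
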